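/- Let N ≥ 3 and k = (k_0,…,k_{r-1}) positive integers summing to N. For ℓ ∈ Fin N let P_ℓ be the orthogonal projection in L²(μ_{N,k}) onto the functions on V_{N,k} depending only on the coordinate x_ℓ, and set P = (1/N) Σ_ℓ P_ℓ. Then the eigenvalue 1 of P has multiplicity one with eigenspace the constant functions. -/

import Mathlib

open scoped Classical BigOperators

/-- The multislice: tuples `x : Fin N → Fin r` in which each value `m` is
attained exactly `k m` times. -/
def multislice (N r : ℕ) (k : Fin r → ℕ) : Finset (Fin N → Fin r) :=
  Finset.univ.filter fun x => ∀ m : Fin r,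
    (Finset.univ.filter fun ℓ => x ℓ = m).card = k m

/-- `P_ℓ`: conditional expectation given the coordinate `x ℓ` (with respect to
the uniform measure on the multislice). -/
noncomputable def Pl (N r : ℕ) (k : Fin r → ℕ) (ℓ : Fin N)
    (f : (Fin N → Fin r) → ℝ) (x : Fin N → Fin r) : ℝ :=
  (∑ y ∈ (multislice N r k).filter (fun y => y ℓ = x ℓ), f y)
    / (((multislice N r k).filter (fun y => y ℓ = x ℓ)).card : ℝ)

/-- `P = (1/N) ∑ ℓ, P_ℓ`. -/
noncomputable def Pop (N r : ℕ) (k : Fin r → ℕ)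
    (f : (Fin N → Fin r) → ℝ) (x : Fin N → Fin r) : ℝ :=
  (1 / (N : ℝ)) * ∑ ℓ, Pl N r k ℓ f x

lemma count_get_aux {α : Type*} [DecidableEq α] (l : List α) (m : α) :
    (Finset.univ.filter fun i : Fin l.length => l.get i = m).card = l.count m := by
  induction l with
  | nil => simp
  | cons a t ih =>
    rw [Finset.card_filter] at ih ⊢
    simp only [List.get_eq_getElem] at ih ⊢
    show (∑ i : Fin (t.length + 1), if (a :: t)[(i : ℕ)] = m then 1 else 0)
        = List.count m (a :: t)
    rw [Fin.sum_univ_succ]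
    simp only [Fin.val_zero, Fin.val_succ, List.getElem_cons_zero,
      List.getElem_cons_succ, ih, List.count_cons, beq_iff_eq]
    by_cases h : a = m
    · simp [h]; omega
    · simp [h, Ne.symm h]

lemma mem_multislice_iff {N r : ℕ} {k : Fin r → ℕ} {x : Fin N → Fin r} :
    x ∈ multislice N r k ↔ ∀ m : Fin r,
      (Finset.univ.filter fun ℓ => x ℓ = m).card = k m := by
  simp [multislice]

lemma multislice_nonempty (N r : ℕ) (k : Fin r → ℕ) (hk : ∑ m, k m = N) :
    (multislice N r k).Nonempty := by
  classical
  set s : Multiset (Fin r) := ∑ m, (k m) • ({m} : Multiset (Fin r)) with hs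
  have hcount : ∀ m, s.count m = k m := by
    intro m
    rw [hs, Multiset.count_sum']
    rw [Finset.sum_eq_single m]
    · simp
    · intro b _ hb
      simp [Multiset.count_nsmul, Multiset.count_singleton, Ne.symm hb]
    · simp
  have hcard : Multiset.card s = N := by
    rw [← Multiset.sum_count_eq_card (s := Finset.univ) (fun a _ => Finset.mem_univ a)]
    simp only [hcount]
    exact hk
  have hl : s.toList.length = N := by
    rw [← Multiset.coe_card, Multiset.coe_toList]; exact hcard
  refine ⟨fun i => s.toList.get (Fin.cast hl.symm i), ?_⟩
  rw [mem_multislice_iff]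
  intro m
  have h1 := count_get_aux s.toList m
  have h2 : s.toList.count m = k m := by
    have : Multiset.count m (↑s.toList) = s.count m := by rw [Multiset.coe_toList]
    rw [← hcount m, ← this, Multiset.coe_count]
  rw [← h2, ← h1]
  exact Finset.card_bij' (fun i _ => Fin.cast hl.symm i) (fun i _ => Fin.cast hl i)
    (by intro a ha; simpa using ha) (by intro a ha; simpa using ha)
    (by intro a _; rfl) (by intro a _; rfl)

lemma swap_mem_multislice {N r : ℕ} {k : Fin r → ℕ} {x : Fin N → Fin r}
    (hx : x ∈ multislice N r k) (i j : Fin N) :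
    (x ∘ Equiv.swap i j) ∈ multislice N r k := by
  rw [mem_multislice_iff] at hx ⊢
  intro m
  rw [← hx m]
  exact Finset.card_bij' (fun ℓ _ => Equiv.swap i j ℓ) (fun ℓ _ => Equiv.swap i j ℓ)
    (by intro a ha; simp only [Finset.mem_filter, Finset.mem_univ, true_and,
          Function.comp_apply] at ha ⊢; exact ha)
    (by intro a ha; simp only [Finset.mem_filter, Finset.mem_univ, true_and,
          Function.comp_apply] at ha ⊢; simpa using ha)
    (by intro a _; simp) (by intro a _; simp)

lemma sum_eq_all_eq {α : Type*} (s : Finset α) (g : α → ℝ) (M : ℝ)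
    (hle : ∀ a ∈ s, g a ≤ M) (hsum : ∑ a ∈ s, g a = s.card * M) :
    ∀ a ∈ s, g a = M := by
  intro a ha
  by_contra hne
  have hlt : ∑ b ∈ s, g b < ∑ _b ∈ s, M :=
    Finset.sum_lt_sum hle ⟨a, ha, lt_of_le_of_ne (hle a ha) hne⟩
  rw [Finset.sum_const, nsmul_eq_mul] at hlt
  rw [hsum] at hlt
  exact lt_irrefl _ hlt

/-- maximizer propagation: if `f` attains its max `M` at `x`, and the fixed-point
equation holds, then `f = M` on every slice through `x`. -/
lemma max_propagates {N r : ℕ} {k : Fin r → ℕ} {f : (Fin N → Fin r) → ℝ} {M : ℝ}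
    (hN : 3 ≤ N)
    (hfix : ∀ x ∈ multislice N r k, Pop N r k f x = f x)
    (hbd : ∀ y ∈ multislice N r k, f y ≤ M)
    {x : Fin N → Fin r} (hx : x ∈ multislice N r k) (hfx : f x = M)
    {y : Fin N → Fin r} (hy : y ∈ multislice N r k) {ℓ : Fin N} (hyl : y ℓ = x ℓ) :
    f y = M := by
  classical
  have hNpos : (0:ℝ) < N := by
    have : (3:ℝ) ≤ N := by exact_mod_cast hN
    linarith
  -- each Pl ≤ M
  have hT : ∀ ℓ' : Fin N, x ∈ (multislice N r k).filter (fun z => z ℓ' = x ℓ') :=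
    fun ℓ' => Finset.mem_filter.2 ⟨hx, rfl⟩
  have hcardpos : ∀ ℓ' : Fin N,
      (0:ℝ) < (((multislice N r k).filter (fun z => z ℓ' = x ℓ')).card : ℝ) := by
    intro ℓ'
    exact_mod_cast Finset.card_pos.2 ⟨x, hT ℓ'⟩
  have hPl_le : ∀ ℓ' : Fin N, Pl N r k ℓ' f x ≤ M := by
    intro ℓ'
    rw [Pl, div_le_iff₀ (hcardpos ℓ')]
    calc ∑ z ∈ (multislice N r k).filter (fun z => z ℓ' = x ℓ'), f z
        ≤ ∑ _z ∈ (multislice N r k).filter (fun z => z ℓ' = x ℓ'), M :=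
          Finset.sum_le_sum fun z hz => hbd z (Finset.mem_of_mem_filter z hz)
      _ = _ := by rw [Finset.sum_const, nsmul_eq_mul]; ring
  -- sum of Pl equals N * M
  have hPop : Pop N r k f x = M := by rw [hfix x hx, hfx]
  have hsum : ∑ ℓ', Pl N r k ℓ' f x = (Finset.univ : Finset (Fin N)).card * M := by
    rw [Pop] at hPop
    rw [Finset.card_univ, Fintype.card_fin]
    field_simp at hPop
    linarith [hPop]
  have hPl_eq : Pl N r k ℓ f x = M :=
    sum_eq_all_eq Finset.univ (fun ℓ' => Pl N r k ℓ' f x) M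
      (fun ℓ' _ => hPl_le ℓ') hsum ℓ (Finset.mem_univ ℓ)
  -- hence f = M on the slice through x at ℓ, which contains y
  rw [Pl, div_eq_iff (ne_of_gt (hcardpos ℓ))] at hPl_eq
  have hyT : y ∈ (multislice N r k).filter (fun z => z ℓ = x ℓ) :=
    Finset.mem_filter.2 ⟨hy, hyl⟩
  exact sum_eq_all_eq _ f M
    (fun z hz => hbd z (Finset.mem_of_mem_filter z hz))
    (by rw [hPl_eq]; ring) y hyT

/-- For `N ≥ 3`, the eigenvalue `1` of `P` has multiplicity one: `P f = f` on
the multislice iff `f` is constant there. -/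
theorem Pop_fixed_iff_constant (N r : ℕ) (hN : 3 ≤ N) (k : Fin r → ℕ)
    (hk : ∑ m, k m = N) (hpos : ∀ m, 1 ≤ k m)
    (f : (Fin N → Fin r) → ℝ) :
    (∀ x ∈ multislice N r k, Pop N r k f x = f x) ↔
      ∃ c : ℝ, ∀ x ∈ multislice N r k, f x = c := by
  classical
  constructor
  · intro hfix
    obtain ⟨x₀, hx₀, hmax⟩ := Finset.exists_max_image (multislice N r k) f
      (multislice_nonempty N r k hk)
    refine ⟨f x₀, ?_⟩
    set M := f x₀ with hM
    have main : ∀ n : ℕ, ∀ x, x ∈ multislice N r k →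
        (Finset.univ.filter fun ℓ => x ℓ ≠ x₀ ℓ).card ≤ n → f x = M := by
      intro n
      induction n with
      | zero =>
        intro x hx h
        have hemp : (Finset.univ.filter fun ℓ => x ℓ ≠ x₀ ℓ) = ∅ :=
          Finset.card_eq_zero.1 (Nat.le_zero.1 h)
        have : x = x₀ := by
          funext ℓ
          by_contra hc
          have : ℓ ∈ (Finset.univ.filter fun ℓ => x ℓ ≠ x₀ ℓ) :=
            Finset.mem_filter.2 ⟨Finset.mem_univ _, hc⟩
          rw [hemp] at this
          exact absurd this (Finset.notMem_empty _)
        rw [this]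
      | succ n ih =>
        intro x hx h
        by_cases hall : ∀ ℓ, x ℓ = x₀ ℓ
        · have : x = x₀ := funext hall
          rw [this]
        · push_neg at hall
          obtain ⟨i, hi⟩ := hall
          -- find j with x j = x₀ i and x₀ j ≠ x₀ i
          set m := x₀ i with hm
          have hAcard : (Finset.univ.filter fun ℓ => x ℓ = m).card = k m :=
            mem_multislice_iff.1 hx m
          have hBcard : (Finset.univ.filter fun ℓ => x₀ ℓ = m).card = k m :=
            mem_multislice_iff.1 hx₀ m
          have hnotsub : ¬ (Finset.univ.filter fun ℓ => x ℓ = m)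
              ⊆ (Finset.univ.filter fun ℓ => x₀ ℓ = m) := by
            intro hsub
            have heq : (Finset.univ.filter fun ℓ => x ℓ = m)
                = (Finset.univ.filter fun ℓ => x₀ ℓ = m) :=
              Finset.eq_of_subset_of_card_le hsub (by rw [hAcard, hBcard])
            have hiB : i ∈ (Finset.univ.filter fun ℓ => x₀ ℓ = m) :=
              Finset.mem_filter.2 ⟨Finset.mem_univ _, rfl⟩
            rw [← heq] at hiB
            exact hi (Finset.mem_filter.1 hiB).2
          obtain ⟨j, hjA, hjB⟩ := Finset.not_subset.1 hnotsub
          have hxj : x j = m := (Finset.mem_filter.1 hjA).2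
          have hx0j : x₀ j ≠ m := fun hc =>
            hjB (Finset.mem_filter.2 ⟨Finset.mem_univ _, hc⟩)
          have hji : j ≠ i := by
            intro hc
            rw [hc] at hxj
            exact hi hxj
          set x' := x ∘ Equiv.swap i j with hx'def
          have hx' : x' ∈ multislice N r k := swap_mem_multislice hx i j
          -- the disagreement set of x' is contained in that of x minus i
          have hsub' : (Finset.univ.filter fun ℓ => x' ℓ ≠ x₀ ℓ)
              ⊆ (Finset.univ.filter fun ℓ => x ℓ ≠ x₀ ℓ).erase i := by
            intro ℓ hℓ
            have hℓ' : x' ℓ ≠ x₀ ℓ := (Finset.mem_filter.1 hℓ).2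
            rcases eq_or_ne ℓ i with rfl | hℓi
            · exfalso
              apply hℓ'
              simp only [hx'def, Function.comp_apply, Equiv.swap_apply_left]
              rw [hxj]
            · rcases eq_or_ne ℓ j with rfl | hℓj
              · refine Finset.mem_erase.2 ⟨hji, Finset.mem_filter.2 ⟨Finset.mem_univ _, ?_⟩⟩
                rw [hxj]
                exact fun hc => hx0j hc.symm
              · refine Finset.mem_erase.2 ⟨hℓi, Finset.mem_filter.2 ⟨Finset.mem_univ _, ?_⟩⟩
                have : x' ℓ = x ℓ := by
                  simp only [hx'def, Function.comp_apply,
                    Equiv.swap_apply_of_ne_of_ne hℓi hℓj]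
                rw [← this]
                exact hℓ'
          have hiD : i ∈ (Finset.univ.filter fun ℓ => x ℓ ≠ x₀ ℓ) :=
            Finset.mem_filter.2 ⟨Finset.mem_univ _, hi⟩
          have hdec : (Finset.univ.filter fun ℓ => x' ℓ ≠ x₀ ℓ).card ≤ n := by
            have h1 := Finset.card_le_card hsub'
            rw [Finset.card_erase_of_mem hiD] at h1
            have h2 : 1 ≤ (Finset.univ.filter fun ℓ => x ℓ ≠ x₀ ℓ).card :=
              Finset.card_pos.2 ⟨i, hiD⟩
            omega
          have hfx' : f x' = M := ih x' hx' hdec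
          -- find a coordinate shared by x and x'
          have hℓex : ∃ ℓ : Fin N, ℓ ≠ i ∧ ℓ ≠ j := by
            by_contra hc
            push_neg at hc
            have hsub2 : (Finset.univ : Finset (Fin N)) ⊆ {i, j} := by
              intro ℓ _
              rcases eq_or_ne ℓ i with rfl | h1
              · exact Finset.mem_insert_self _ _
              · rw [hc ℓ h1]
                exact Finset.mem_insert_of_mem (Finset.mem_singleton_self _)
            have := Finset.card_le_card hsub2
            rw [Finset.card_univ, Fintype.card_fin] at this
            have h2 : ({i, j} : Finset (Fin N)).card ≤ 2 :=
              Finset.card_insert_le i {j} |>.trans (by simp)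
            omega
          obtain ⟨ℓ, hℓi, hℓj⟩ := hℓex
          have hshare : x ℓ = x' ℓ := by
            simp only [hx'def, Function.comp_apply,
              Equiv.swap_apply_of_ne_of_ne hℓi hℓj]
          exact max_propagates hN hfix hmax hx' hfx' hx hshare
    intro x hx
    exact main _ x hx le_rfl
  · rintro ⟨c, hc⟩ x hx
    have hNpos : (0:ℝ) < N := by
      have : (3:ℝ) ≤ N := by exact_mod_cast hN
      linarith
    have hPl : ∀ ℓ : Fin N, Pl N r k ℓ f x = c := by
      intro ℓ
      have hxT : x ∈ (multislice N r k).filter (fun z => z ℓ = x ℓ) :=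
        Finset.mem_filter.2 ⟨hx, rfl⟩
      have hcardpos : (0:ℝ) <
          (((multislice N r k).filter (fun z => z ℓ = x ℓ)).card : ℝ) := by
        exact_mod_cast Finset.card_pos.2 ⟨x, hxT⟩
      rw [Pl]
      rw [Finset.sum_congr rfl (fun z hz => hc z (Finset.mem_of_mem_filter z hz))]
      rw [Finset.sum_const, nsmul_eq_mul]
      field_simp
    rw [Pop]
    rw [Finset.sum_congr rfl (fun ℓ _ => hPl ℓ)]
    rw [Finset.sum_const, nsmul_eq_mul, Finset.card_univ, Fintype.card_fin]
    rw [hc x hx]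
    field_simp
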